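/- Let T be a caterpillar tree with central path (p₁, …, p_s) and with every remaining vertex a leaf adjacent to some pᵢ. Let ≻ be a linear order on the vertex set of T such that (i) the restriction of ≻ to {p₁, …, p_s} is single-peaked with respect to the order p₁ ≻' p₂ ≻' ⋯ ≻' p_s, and (ii) every central-path vertex is preferred under ≻ to every off-path leaf (the off-path leaves being ordered arbitrarily among themselves). Then ≻ is single-peaked on T. -/

import Mathlib

/-- `x` appears strictly before `y` in the list `l`. -/
def listBefore {V : Type*} (l : List V) (x y : V) : Prop :=
  ∃ i j : Fin l.length, i < j ∧ l.get i = x ∧ l.get j = y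

/-- The restriction of `r` to the finite set `X` is single peaked with respect to the
restriction of `r'` to `X`. -/
def SinglePeakedOn {V : Type*} (X : Finset V) (r r' : V → V → Prop) : Prop :=
  ∀ p ∈ X, (∀ x ∈ X, x ≠ p → r p x) →
    ∀ x ∈ X, ∀ y ∈ X, ((r' p x ∧ r' x y) ∨ (r' y x ∧ r' x p)) → r x y

/-- A linear order `r` on the vertex set of `G` is single peaked on the tree `G`. -/
def SinglePeakedOnTree {V : Type*} [DecidableEq V] (G : SimpleGraph V)
    (r : V → V → Prop) : Prop :=
  ∀ l : List V, l.Nodup → l.Chain' G.Adj →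
    SinglePeakedOn l.toFinset r (listBefore l)

section Aux

open SimpleGraph

variable {V : Type*}

lemma getElem_idx_congr (l : List V) {i j : ℕ} (h : i = j) (hj : j < l.length) :
    l[i]'(h ▸ hj) = l[j] := by subst h; rfl

lemma chain'_adj {R : V → V → Prop} {l : List V} (ch : l.Chain' R) {i j : ℕ}
    (hij : i + 1 = j) (hj : j < l.length) : R (l[i]'(by omega)) l[j] := by
  subst hij
  have := List.isChain_iff_getElem.mp ch i (by omega)
  simpa using this

lemma listBefore_of_lt {l : List V} {i j : ℕ} (hi : i < l.length) (hj : j < l.length)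
    (hij : i < j) : listBefore l l[i] l[j] :=
  ⟨⟨i, hi⟩, ⟨j, hj⟩, Fin.mk_lt_mk.mpr hij, by simp, by simp⟩

lemma listBefore_ne {l : List V} (nd : l.Nodup) {x y : V} (h : listBefore l x y) : x ≠ y := by
  obtain ⟨i, j, hij, hx, hy⟩ := h
  rintro rfl
  have : i = j := Fin.ext ((nd.getElem_inj_iff).mp (by simpa [List.get_eq_getElem] using hx.trans hy.symm))
  omega

lemma listBefore_mem {l : List V} {x y : V} (h : listBefore l x y) : x ∈ l ∧ y ∈ l := by
  obtain ⟨i, j, hij, hx, hy⟩ := h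
  simp only [List.get_eq_getElem] at hx hy
  exact ⟨hx ▸ List.getElem_mem _, hy ▸ List.getElem_mem _⟩

lemma listBefore_total [DecidableEq V] {l : List V} (nd : l.Nodup) {x y : V}
    (hx : x ∈ l) (hy : y ∈ l) : listBefore l x y ∨ x = y ∨ listBefore l y x := by
  have hix : l.idxOf x < l.length := List.idxOf_lt_length_iff.mpr hx
  have hiy : l.idxOf y < l.length := List.idxOf_lt_length_iff.mpr hy
  have ex : l[l.idxOf x] = x := List.getElem_idxOf hix
  have ey : l[l.idxOf y] = y := List.getElem_idxOf hiy
  rcases lt_trichotomy (l.idxOf x) (l.idxOf y) with h | h | h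
  · exact Or.inl (ex ▸ ey ▸ listBefore_of_lt hix hiy h)
  · exact Or.inr (Or.inl (ex.symm.trans ((getElem_idx_congr l h hiy).trans ey)))
  · exact Or.inr (Or.inr (ey ▸ ex ▸ listBefore_of_lt hiy hix h))

lemma listBefore_reverse {l : List V} {x y : V} (h : listBefore l x y) :
    listBefore l.reverse y x := by
  obtain ⟨i, j, hij, hx, hy⟩ := h
  have hi : (i : ℕ) < l.length := i.isLt
  have hj : (j : ℕ) < l.length := j.isLt
  refine ⟨⟨l.length - 1 - j, by simp; omega⟩, ⟨l.length - 1 - i, by simp; omega⟩,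
    Fin.mk_lt_mk.mpr (by omega), ?_, ?_⟩
  · simp only [List.get_eq_getElem, List.getElem_reverse]
    rw [getElem_idx_congr l (by omega) hj]
    simpa using hy
  · simp only [List.get_eq_getElem, List.getElem_reverse]
    rw [getElem_idx_congr l (by omega) hi]
    simpa using hx

lemma exists_top [DecidableEq V] {succ : V → V → Prop} (hsto : IsStrictTotalOrder V succ)
    (s : Finset V) : s.Nonempty → ∃ m ∈ s, ∀ z ∈ s, z ≠ m → succ m z := by
  induction s using Finset.induction_on with
  | empty => rintro ⟨x, hx⟩; simp at hx
  | insert a s ha ih =>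
    intro _
    rcases s.eq_empty_or_nonempty with rfl | hs'
    · exact ⟨a, by simp, by simp⟩
    · obtain ⟨m, hm, hmax⟩ := ih hs'
      rcases (Classical.or_iff_not_imp_left.mpr fun h1 => Classical.or_iff_not_imp_right.mpr fun h2 => hsto.trichotomous a m h1 h2 : succ a m ∨ a = m ∨ succ m a) with h | h | h
      · refine ⟨a, Finset.mem_insert_self _ _, ?_⟩
        intro z hz hza
        rcases Finset.mem_insert.mp hz with rfl | hz'
        · exact absurd rfl hza
        · rcases eq_or_ne z m with rfl | hzm
          · exact h
          · exact hsto.trans _ _ _ h (hmax z hz' hzm)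
      · exact absurd (h ▸ hm) ha
      · refine ⟨m, Finset.mem_insert_of_mem hm, ?_⟩
        intro z hz hzm
        rcases Finset.mem_insert.mp hz with rfl | hz'
        · exact h
        · exact hmax z hz' hzm

/-- Build a walk from a nonempty list which is a chain of adjacencies. -/
def walkOfChain (G : SimpleGraph V) :
    ∀ (l : List V), l.Chain' G.Adj → ∀ (hl : l ≠ []), G.Walk (l.head hl) (l.getLast hl)
  | [a], _, _ => Walk.nil
  | a :: b :: t, hc, _ =>
    (Walk.cons (List.isChain_cons_cons.mp hc).1
      (walkOfChain G (b :: t) (show (b :: t).Chain' G.Adj from (List.isChain_cons_cons.mp hc).2) (by simp))).copy rfl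
      (List.getLast_cons (by simp)).symm

lemma walkOfChain_support (G : SimpleGraph V) :
    ∀ (l : List V) (hc : l.Chain' G.Adj) (hl : l ≠ []),
      (walkOfChain G l hc hl).support = l
  | [a], _, _ => rfl
  | a :: b :: t, hc, _ => by
    rw [walkOfChain]
    simp [Walk.support_copy, Walk.support_cons,
      walkOfChain_support G (b :: t) (List.isChain_cons_cons.mp hc).2 (by simp)]
    exact congrArg (a :: ·) (walkOfChain_support G (b :: t) _ (by simp))

/-- In a tree, two nodup chains with the same endpoints coincide. -/
lemma chain_unique {G : SimpleGraph V} (hT : G.IsTree) (l₁ l₂ : List V)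
    (h₁ : l₁ ≠ []) (h₂ : l₂ ≠ []) (nd₁ : l₁.Nodup) (nd₂ : l₂.Nodup)
    (c₁ : l₁.Chain' G.Adj) (c₂ : l₂.Chain' G.Adj)
    (hh : l₁.head h₁ = l₂.head h₂) (hl : l₁.getLast h₁ = l₂.getLast h₂) : l₁ = l₂ := by
  let w₁ := walkOfChain G l₁ c₁ h₁
  let w₂ := (walkOfChain G l₂ c₂ h₂).copy hh.symm hl.symm
  have hp₁ : w₁.IsPath := (Walk.isPath_def _).mpr (by
    show (walkOfChain G l₁ c₁ h₁).support.Nodup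
    rw [walkOfChain_support]; exact nd₁)
  have hp₂ : w₂.IsPath := (Walk.isPath_def _).mpr (by
    show ((walkOfChain G l₂ c₂ h₂).copy hh.symm hl.symm).support.Nodup
    rw [Walk.support_copy, walkOfChain_support]; exact nd₂)
  have hpq : (⟨w₁, hp₁⟩ : G.Path _ _) = ⟨w₂, hp₂⟩ := hT.IsAcyclic.path_unique _ _
  have hw : w₁ = w₂ := congrArg Subtype.val hpq
  calc l₁ = w₁.support := (walkOfChain_support G l₁ c₁ h₁).symm
    _ = w₂.support := by rw [hw]
    _ = l₂ := by
        show ((walkOfChain G l₂ c₂ h₂).copy hh.symm hl.symm).support = l₂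
        rw [Walk.support_copy, walkOfChain_support]

end Aux

section Main

open SimpleGraph

variable {V : Type*} [Fintype V] [DecidableEq V] {G : SimpleGraph V} [DecidableRel G.Adj]

/-- An interior vertex of a path has degree at least two, hence lies on the spine. -/
lemma mem_P_of_internal {P : List V}
    (hcat : ∀ v : V, v ∉ P → G.degree v = 1 ∧ ∃ u ∈ P, G.Adj v u)
    {l : List V} (nd : l.Nodup) (ch : l.Chain' G.Adj)
    {j : ℕ} (h0 : 0 < j) (hj : j + 1 < l.length) : (l[j]'(by omega)) ∈ P := by
  by_contra hP
  have hdeg := (hcat _ hP).1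
  have h1 : G.Adj (l[j-1]'(by omega)) (l[j]'(by omega)) := chain'_adj ch (by omega) (by omega)
  have h2 : G.Adj (l[j]'(by omega)) (l[j+1]'(by omega)) := chain'_adj ch rfl hj
  have hne : (l[j-1]'(by omega)) ≠ (l[j+1]'(by omega)) := by
    intro h
    have := (nd.getElem_inj_iff).mp h
    omega
  have hcard : 1 < (G.neighborFinset (l[j]'(by omega))).card :=
    Finset.one_lt_card.mpr ⟨_, (G.mem_neighborFinset _ _).mpr h1.symm,
      _, (G.mem_neighborFinset _ _).mpr h2, hne⟩
  rw [← G.card_neighborFinset_eq_degree] at hdeg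
  omega

/-- The portion of a path between two spine vertices follows the spine. -/
lemma segment_lemma (hT : G.IsTree) {P : List V} (hPnd : P.Nodup) (hPch : P.Chain' G.Adj)
    {l : List V} (nd : l.Nodup) (ch : l.Chain' G.Adj)
    {i j k : ℕ} (hij : i < j) (hjk : j < k) (hk : k < l.length)
    (hp : (l[i]'(by omega)) ∈ P) (hy : l[k] ∈ P) :
    (listBefore P (l[i]'(by omega)) (l[j]'(by omega)) ∧ listBefore P (l[j]'(by omega)) l[k]) ∨
    (listBefore P l[k] (l[j]'(by omega)) ∧ listBefore P (l[j]'(by omega)) (l[i]'(by omega))) := by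
  have hi : i < l.length := by omega
  have hjl : j < l.length := by omega
  set l' : List V := (l.drop i).take (k - i + 1) with hl'def
  have hlen' : l'.length = k - i + 1 := by
    simp only [hl'def, List.length_take, List.length_drop]
    omega
  have hget' : ∀ m (hm : m < k - i + 1), l'[m]'(by omega) = l[i+m]'(by omega) := by
    intro m hm
    simp only [hl'def, List.getElem_take, List.getElem_drop]
  have nd' : l'.Nodup :=
    List.Nodup.sublist ((List.take_sublist _ _).trans (List.drop_sublist _ _)) nd
  have ch' : l'.Chain' G.Adj := (ch.drop i).take _
  have hne' : l' ≠ [] := List.ne_nil_of_length_pos (by omega)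
  have hhead' : l'.head hne' = l[i] := by
    rw [List.head_eq_getElem, hget' 0 (by omega)]
    exact getElem_idx_congr l (by omega) hi
  have hlast' : l'.getLast hne' = l[k] := by
    rw [List.getLast_eq_getElem]
    have h1 : l'.length - 1 = k - i := by omega
    rw [getElem_idx_congr l' h1 (by omega), hget' (k-i) (by omega)]
    exact getElem_idx_congr l (by omega) hk
  -- spine indices
  have ha : P.idxOf (l[i]'hi) < P.length := List.idxOf_lt_length_iff.mpr hp
  have hb : P.idxOf l[k] < P.length := List.idxOf_lt_length_iff.mpr hy
  set a := P.idxOf (l[i]'hi) with hadef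
  set b := P.idxOf l[k] with hbdef
  have Pa : P[a] = l[i] := List.getElem_idxOf ha
  have Pb : P[b] = l[k] := List.getElem_idxOf hb
  have hik : (l[i]'hi) ≠ l[k] := by
    intro h; have := (nd.getElem_inj_iff).mp h; omega
  have hab : a ≠ b := fun h => hik (Pa.symm.trans ((getElem_idx_congr P h hb).trans Pb))
  rcases Nat.lt_or_ge a b with hlt | hge
  · -- a < b : the path follows the spine forwards
    set P' : List V := (P.drop a).take (b - a + 1) with hP'def
    have hPlen' : P'.length = b - a + 1 := by
      simp only [hP'def, List.length_take, List.length_drop]; omega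
    have hPget' : ∀ m (hm : m < b - a + 1), P'[m]'(by omega) = P[a+m]'(by omega) := by
      intro m hm
      simp only [hP'def, List.getElem_take, List.getElem_drop]
    have Pnd' : P'.Nodup :=
      List.Nodup.sublist ((List.take_sublist _ _).trans (List.drop_sublist _ _)) hPnd
    have Pch' : P'.Chain' G.Adj := (hPch.drop a).take _
    have hPne' : P' ≠ [] := List.ne_nil_of_length_pos (by omega)
    have hPhead' : P'.head hPne' = l[i] := by
      rw [List.head_eq_getElem, hPget' 0 (by omega)]
      rw [getElem_idx_congr P (by omega) ha]; exact Pa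
    have hPlast' : P'.getLast hPne' = l[k] := by
      rw [List.getLast_eq_getElem]
      have h1 : P'.length - 1 = b - a := by omega
      rw [getElem_idx_congr P' h1 (by omega), hPget' (b-a) (by omega)]
      rw [getElem_idx_congr P (by omega) hb]; exact Pb
    have heq : l' = P' := chain_unique hT l' P' hne' hPne' nd' Pnd' ch' Pch'
      (by rw [hhead', hPhead']) (by rw [hlast', hPlast'])
    have hlen_eq : k - i = b - a := by
      have := hlen' ▸ heq ▸ hPlen'; omega
    have hx : (l[j]'hjl) = P[a + (j - i)]'(by omega) := by
      have h1 : (l[j]'hjl) = l'[j-i]'(by omega) := by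
        rw [hget' (j-i) (by omega)]
        exact (getElem_idx_congr l (by omega) hjl).symm
      rw [h1]
      have h2 : l'[j-i]'(by omega) = P'[j-i]'(by rw [← heq]; omega) := by
        congr 1
      rw [h2, hPget' (j-i) (by omega)]
    refine Or.inl ⟨?_, ?_⟩
    · rw [← Pa, hx]; exact listBefore_of_lt ha (by omega) (by omega)
    · rw [← Pb, hx]
      have : b = a + (k - i) := by omega
      exact listBefore_of_lt (by omega) hb (by omega)
  · -- b < a : the path follows the spine backwards
    have hlt : b < a := by omega
    set P' : List V := (P.drop b).take (a - b + 1) with hP'def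
    have hPlen' : P'.length = a - b + 1 := by
      simp only [hP'def, List.length_take, List.length_drop]; omega
    have hPget' : ∀ m (hm : m < a - b + 1), P'[m]'(by omega) = P[b+m]'(by omega) := by
      intro m hm
      simp only [hP'def, List.getElem_take, List.getElem_drop]
    have Pnd' : P'.Nodup :=
      List.Nodup.sublist ((List.take_sublist _ _).trans (List.drop_sublist _ _)) hPnd
    have Pch' : P'.Chain' G.Adj := (hPch.drop b).take _
    have hPne' : P' ≠ [] := List.ne_nil_of_length_pos (by omega)
    have hPhead' : P'.head hPne' = l[k] := by
      rw [List.head_eq_getElem, hPget' 0 (by omega)]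
      rw [getElem_idx_congr P (by omega) hb]; exact Pb
    have hPlast' : P'.getLast hPne' = l[i] := by
      rw [List.getLast_eq_getElem]
      have h1 : P'.length - 1 = a - b := by omega
      rw [getElem_idx_congr P' h1 (by omega), hPget' (a-b) (by omega)]
      rw [getElem_idx_congr P (by omega) ha]; exact Pa
    -- reverse of l'
    have ndr : l'.reverse.Nodup := List.nodup_reverse.mpr nd'
    have chr : l'.reverse.Chain' G.Adj :=
      List.isChain_reverse.mpr (ch'.imp fun a b h => h.symm)
    have hner : l'.reverse ≠ [] := by simpa using hne'
    have hlenr : l'.reverse.length = k - i + 1 := by simpa using hlen'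
    have hgetr : ∀ m (hm : m < k - i + 1), l'.reverse[m]'(by omega) = l[i + (k - i - m)]'(by omega) := by
      intro m hm
      rw [List.getElem_reverse]
      have h1 : l'.length - 1 - m = k - i - m := by omega
      rw [getElem_idx_congr l' h1 (by omega), hget' (k - i - m) (by omega)]
    have hheadr : l'.reverse.head hner = l[k] := by
      rw [List.head_eq_getElem, hgetr 0 (by omega)]
      exact getElem_idx_congr l (by omega) hk
    have hlastr : l'.reverse.getLast hner = l[i] := by
      rw [List.getLast_eq_getElem]
      have h1 : l'.reverse.length - 1 = k - i := by omega
      rw [getElem_idx_congr l'.reverse h1 (by omega), hgetr (k-i) (by omega)]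
      exact getElem_idx_congr l (by omega) hi
    have heq : l'.reverse = P' := chain_unique hT l'.reverse P' hner hPne' ndr Pnd' chr Pch'
      (by rw [hheadr, hPhead']) (by rw [hlastr, hPlast'])
    have hlen_eq : k - i = a - b := by
      have := hlenr ▸ heq ▸ hPlen'; omega
    have hx : (l[j]'hjl) = P[b + (k - j)]'(by omega) := by
      have h1 : (l[j]'hjl) = l'.reverse[k-j]'(by omega) := by
        rw [hgetr (k-j) (by omega)]
        exact (getElem_idx_congr l (by omega) hjl).symm
      rw [h1]
      have h2 : l'.reverse[k-j]'(by omega) = P'[k-j]'(by rw [← heq]; omega) := by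
        congr 1
      rw [h2, hPget' (k-j) (by omega)]
    refine Or.inr ⟨?_, ?_⟩
    · rw [← Pb, hx]; exact listBefore_of_lt hb (by omega) (by omega)
    · rw [← Pa, hx]
      have : a = b + (k - i) := by omega
      exact listBefore_of_lt (by omega) ha (by omega)

/-- Single-peakedness on the whole spine restricts to segments. -/
lemma spine_lemma {P : List V} (hPnd : P.Nodup)
    {succ : V → V → Prop} (hsto : IsStrictTotalOrder V succ)
    (hspine : SinglePeakedOn P.toFinset succ (listBefore P))
    {p x y : V} (hpx : succ p x)
    (hd : (listBefore P p x ∧ listBefore P x y) ∨ (listBefore P y x ∧ listBefore P x p)) :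
    succ x y := by
  have asym : ∀ a b : V, succ a b → succ b a → False := fun a b h1 h2 =>
    hsto.irrefl a (hsto.trans a b a h1 h2)
  have hxP : x ∈ P := by
    rcases hd with ⟨h1, _⟩ | ⟨_, h2⟩
    · exact (listBefore_mem h1).2
    · exact (listBefore_mem h2).1
  have hyP : y ∈ P := by
    rcases hd with ⟨_, h2⟩ | ⟨h1, _⟩
    · exact (listBefore_mem h2).2
    · exact (listBefore_mem h1).1
  have hpP : p ∈ P := by
    rcases hd with ⟨h1, _⟩ | ⟨_, h2⟩
    · exact (listBefore_mem h1).1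
    · exact (listBefore_mem h2).2
  have hxy : x ≠ y := by
    rcases hd with ⟨_, h2⟩ | ⟨h1, _⟩
    · exact listBefore_ne hPnd h2
    · exact (listBefore_ne hPnd h1).symm
  obtain ⟨m, hmF, hmax⟩ := exists_top hsto P.toFinset ⟨x, List.mem_toFinset.mpr hxP⟩
  have hmP : m ∈ P := List.mem_toFinset.mp hmF
  have hsp := hspine m hmF hmax
  rcases listBefore_total hPnd hmP hxP with hmx | heq | hxm
  · rcases hd with ⟨_, hxy'⟩ | ⟨hyx, hxp⟩
    · exact hsp x (List.mem_toFinset.mpr hxP) y (List.mem_toFinset.mpr hyP)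
        (Or.inl ⟨hmx, hxy'⟩)
    · exact absurd hpx (fun h => asym _ _ h
        (hsp x (List.mem_toFinset.mpr hxP) p (List.mem_toFinset.mpr hpP)
          (Or.inl ⟨hmx, hxp⟩)))
  · subst heq
    exact hmax y (List.mem_toFinset.mpr hyP) (Ne.symm hxy)
  · rcases hd with ⟨hpx', hxy'⟩ | ⟨hyx, _⟩
    · exact absurd hpx (fun h => asym _ _ h
        (hsp x (List.mem_toFinset.mpr hxP) p (List.mem_toFinset.mpr hpP)
          (Or.inr ⟨hpx', hxm⟩)))
    · exact hsp x (List.mem_toFinset.mpr hxP) y (List.mem_toFinset.mpr hyP)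
        (Or.inr ⟨hyx, hxm⟩)

/-- The main half: peak before `x` before `y` along the path. -/
lemma half_lemma (hT : G.IsTree) {P : List V} (hPnd : P.Nodup) (hPch : P.Chain' G.Adj)
    (hcat : ∀ v : V, v ∉ P → G.degree v = 1 ∧ ∃ u ∈ P, G.Adj v u)
    {succ : V → V → Prop} (hsto : IsStrictTotalOrder V succ)
    (hspine : SinglePeakedOn P.toFinset succ (listBefore P))
    (hpref : ∀ x ∈ P, ∀ y : V, y ∉ P → succ x y)
    {l : List V} (nd : l.Nodup) (ch : l.Chain' G.Adj)
    {p x y : V} (hmax : ∀ z ∈ l, z ≠ p → succ p z)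
    (h1 : listBefore l p x) (h2 : listBefore l x y) : succ x y := by
  have asym : ∀ a b : V, succ a b → succ b a → False := fun a b ha hb =>
    hsto.irrefl a (hsto.trans a b a ha hb)
  obtain ⟨i1, i2, h12, e1, e2⟩ := h1
  obtain ⟨i3, i4, h34, e3, e4⟩ := h2
  simp only [List.get_eq_getElem] at e1 e2 e3 e4
  have h23 : (i2 : ℕ) = (i3 : ℕ) := (nd.getElem_inj_iff).mp (e2.trans e3.symm)
  set i := (i1 : ℕ) with hidef
  set j := (i2 : ℕ) with hjdef
  set k := (i4 : ℕ) with hkdef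
  have hij : i < j := h12
  have hjk : j < k := by have : (i3:ℕ) < (i4:ℕ) := h34; omega
  have hk : k < l.length := i4.isLt
  have hi : i < l.length := i1.isLt
  have hjl : j < l.length := i2.isLt
  have e3' : (l[j]'hjl) = x := by rw [← e3]; exact getElem_idx_congr l h23 i3.isLt
  have hxP : x ∈ P := by
    rw [← e3']
    exact mem_P_of_internal hcat nd ch (by omega) (by omega)
  have hxl : x ∈ l := by rw [← e3']; exact List.getElem_mem _
  have hxp : x ≠ p := by
    intro h
    have : i = j := (nd.getElem_inj_iff).mp (by rw [e1, e3', h])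
    omega
  have hpx : succ p x := hmax x hxl hxp
  have hpP : p ∈ P := by
    by_contra h
    exact asym _ _ (hpref x hxP p h) hpx
  by_cases hyP : y ∈ P
  · refine spine_lemma hPnd hsto hspine hpx ?_
    have := segment_lemma hT hPnd hPch nd ch hij hjk hk (e1 ▸ hpP) (e4 ▸ hyP)
    rw [e1, e4, e3'] at this
    exact this
  · exact hpref x hxP y hyP

end Main

/-- Let `G` be a caterpillar tree with central path `P` (every vertex off the path is a
leaf adjacent to some vertex of `P`).  Any linear order whose restriction to the central
path is single peaked with respect to the path order and which prefers every
central-path vertex to every off-path leaf is single peaked on `G`. -/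
theorem caterpillar_singlePeaked
    {V : Type*} [Fintype V] [DecidableEq V] (G : SimpleGraph V) [DecidableRel G.Adj]
    (hT : G.IsTree)
    (P : List V) (hPne : P ≠ []) (hPnd : P.Nodup) (hPch : P.Chain' G.Adj)
    (hcat : ∀ v : V, v ∉ P → G.degree v = 1 ∧ ∃ u ∈ P, G.Adj v u)
    (succ : V → V → Prop) (hsto : IsStrictTotalOrder V succ)
    (hspine : SinglePeakedOn P.toFinset succ (listBefore P))
    (hpref : ∀ x ∈ P, ∀ y : V, y ∉ P → succ x y) :
    SinglePeakedOnTree G succ := by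
  intro l nd ch p hpF hmaxF x hxF y hyF hd
  have hmax : ∀ z ∈ l, z ≠ p → succ p z := fun z hz => hmaxF z (List.mem_toFinset.mpr hz)
  rcases hd with ⟨hpx, hxy⟩ | ⟨hyx, hxp⟩
  · exact half_lemma hT hPnd hPch hcat hsto hspine hpref nd ch hmax hpx hxy
  · have nd' : l.reverse.Nodup := List.nodup_reverse.mpr nd
    have ch' : l.reverse.Chain' G.Adj :=
      List.isChain_reverse.mpr (ch.imp fun a b h => h.symm)
    have hmax' : ∀ z ∈ l.reverse, z ≠ p → succ p z := fun z hz =>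
      hmax z (List.mem_reverse.mp hz)
    exact half_lemma hT hPnd hPch hcat hsto hspine hpref nd' ch' hmax'
      (listBefore_reverse hxp) (listBefore_reverse hyx)
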